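/- Let λ < κ be infinite cardinals with λ regular, and assume 2^{2^λ} > 2^κ. Then there is an open subset of the space Mod^κ_L of graph structures on κ (with the bounded topology) that is closed under isomorphism but is not the set of models of any L_{κ⁺κ}-sentence. -/

import Mathlib

open Cardinal Set

/-- The bounded topology on `Mod^κ_L ≅ ^{κ×κ}2`, generated by the sets determined by
partial functions with domain of size `< κ`. -/
def modTopology (κ : Cardinal) : TopologicalSpace (κ.ord.ToType → κ.ord.ToType → Bool) :=
  TopologicalSpace.generateFrom
    {U | ∃ (d : Set (κ.ord.ToType × κ.ord.ToType)) (σ : κ.ord.ToType → κ.ord.ToType → Bool),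
      Cardinal.mk ↥d < κ ∧ U = {x | ∀ p ∈ d, x p.1 p.2 = σ p.1 p.2}}

/-- Isomorphism of coded graph structures on `κ`, via a permutation of `κ`. -/
def modIso (κ : Cardinal) (x y : κ.ord.ToType → κ.ord.ToType → Bool) : Prop :=
  ∃ p : κ.ord.ToType ≃ κ.ord.ToType, ∀ a b : κ.ord.ToType, y (p a) (p b) = x a b

noncomputable section

namespace Stmt18

open Classical in
/-- Pad a structure on `V` to a structure on `T` along an injection, with `false` outside. -/
def padF {V T : Type} (e : V → T) (H : V → V → Bool) : T → T → Bool :=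
  fun a b => if h : (∃ v, e v = a) ∧ (∃ w, e w = b) then H h.1.choose h.2.choose else false

lemma padF_apply {V T : Type} {e : V → T} (he : Function.Injective e) (H : V → V → Bool)
    (v w : V) : padF e H (e v) (e w) = H v w := by
  have h : (∃ v', e v' = e v) ∧ (∃ w', e w' = e w) := ⟨⟨v, rfl⟩, ⟨w, rfl⟩⟩
  have hv : h.1.choose = v := he h.1.choose_spec
  have hw : h.2.choose = w := he h.2.choose_spec
  simp only [padF]
  rw [dif_pos h, hv, hw]

lemma padF_support {V T : Type} {e : V → T} {H : V → V → Bool} {a b : T}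
    (h : padF e H a b = true) : (∃ v, e v = a) ∧ (∃ w, e w = b) := by
  by_contra hc
  simp only [padF, dif_neg hc] at h
  exact Bool.false_ne_true h

/-- The set of structures on `T` containing an induced copy of `H`. -/
def embSet (T : Type) {V : Type} (H : V → V → Bool) : Set (T → T → Bool) :=
  {x | ∃ f : V → T, Function.Injective f ∧ ∀ v w, x (f v) (f w) = H v w}

lemma isOpen_embSet (κ : Cardinal) (hκ : ℵ₀ ≤ κ) {V : Type} (hV : #V < κ)
    (H : V → V → Bool) : (modTopology κ).IsOpen (embSet κ.ord.ToType H) := by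
  set T := κ.ord.ToType
  have : embSet T H = ⋃₀ {B | ∃ f : V → T, Function.Injective f ∧
      B = {x | ∀ v w, x (f v) (f w) = H v w}} := by
    ext x
    constructor
    · rintro ⟨f, hf, hx⟩
      exact ⟨_, ⟨f, hf, rfl⟩, hx⟩
    · rintro ⟨B, ⟨f, hf, rfl⟩, hx⟩
      exact ⟨f, hf, hx⟩
  rw [this]
  apply TopologicalSpace.GenerateOpen.sUnion
  rintro B ⟨f, hf, rfl⟩
  apply TopologicalSpace.GenerateOpen.basic
  refine ⟨{p | ∃ v w, p = (f v, f w)}, padF f H, ?_, ?_⟩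
  · have hd : #{p : T × T | ∃ v w, p = (f v, f w)} ≤ #(V × V) := by
      refine mk_le_of_surjective
        (f := fun p : V × V => ⟨(f p.1, f p.2), p.1, p.2, rfl⟩) ?_
      rintro ⟨p, v, w, rfl⟩
      exact ⟨(v, w), rfl⟩
    have hVV : #(V × V) < κ := by
      rw [mk_prod]
      simp only [lift_id]
      exact mul_lt_of_lt hκ hV hV
    exact hd.trans_lt hVV
  · ext x
    simp only [Set.mem_setOf_eq]
    constructor
    · intro hx p hp
      obtain ⟨v, w, rfl⟩ := hp
      simpa [padF_apply hf] using hx v w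
    · intro hx v w
      have := hx (f v, f w) ⟨v, w, rfl⟩
      simpa [padF_apply hf] using this

theorem plumbing (κ ν : Cardinal) (hκ : ℵ₀ ≤ κ)
    (hcard : (2 : Cardinal) ^ κ < (2 : Cardinal) ^ ((2 : Cardinal) ^ ν))
    (J V : Type) (hJν : #J = ν) (hV : #V < κ)
    (H : Set J → V → V → Bool)
    (hsupp : ∀ (A : Set J) (v : V), ∃ w, H A v w = true ∨ H A w v = true)
    (hanti : ∀ (A B : Set J) (g : V → V), Function.Injective g →
      (∀ v w, H B (g v) (g w) = H A v w) → A = B) :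
    ∀ (S : Type) (hS : Cardinal.mk S ≤ (2 : Cardinal) ^ κ)
      (Mods : S → Set (κ.ord.ToType → κ.ord.ToType → Bool)),
      ∃ U : Set (κ.ord.ToType → κ.ord.ToType → Bool),
        (modTopology κ).IsOpen U ∧
        (∀ x y, modIso κ x y → (x ∈ U ↔ y ∈ U)) ∧
        ∀ φ : S, Mods φ ≠ U := by
  set T := κ.ord.ToType with hT
  intro S hS Mods
  have hVT : #V ≤ #T := by
    rw [mk_toType, card_ord]; exact hV.le
  obtain ⟨e⟩ := (Cardinal.le_def V T).mp hVT
  set U : Set (Set J) → Set (T → T → Bool) := fun 𝒮 => ⋃ A ∈ 𝒮, embSet T (H A) with hU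
  have hopen : ∀ 𝒮, (modTopology κ).IsOpen (U 𝒮) := by
    intro 𝒮
    letI : TopologicalSpace (T → T → Bool) := modTopology κ
    exact isOpen_biUnion (fun A _ => isOpen_embSet κ hκ hV (H A))
  have hinv : ∀ 𝒮 x y, modIso κ x y → (x ∈ U 𝒮 ↔ y ∈ U 𝒮) := by
    rintro 𝒮 x y ⟨p, hp⟩
    simp only [hU, Set.mem_iUnion]
    constructor
    · rintro ⟨A, hA, f, hf, hx⟩
      exact ⟨A, hA, fun v => p (f v), p.injective.comp hf, fun v w => by rw [hp, hx]⟩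
    · rintro ⟨A, hA, f, hf, hy⟩
      refine ⟨A, hA, fun v => p.symm (f v), p.symm.injective.comp hf, fun v w => ?_⟩
      rw [← hy v w, ← hp (p.symm (f v)) (p.symm (f w)), p.apply_symm_apply, p.apply_symm_apply]
  set x0 : Set J → (T → T → Bool) := fun A => padF e (H A) with hx0
  have hwit : ∀ (A : Set J) (𝒮 : Set (Set J)), x0 A ∈ U 𝒮 ↔ A ∈ 𝒮 := by
    intro A 𝒮
    simp only [hU, Set.mem_iUnion]
    constructor
    · rintro ⟨B, hB, f, hf, hx⟩
      have hrange : ∀ v, ∃ u, e u = f v := by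
        intro v
        obtain ⟨w, hw | hw⟩ := hsupp B v
        · have h2 := hx v w; rw [hw] at h2
          exact (padF_support h2).1
        · have h2 := hx w v; rw [hw] at h2
          exact (padF_support h2).2
      choose g hg using hrange
      have hginj : Function.Injective g := by
        intro v w h
        apply hf; rw [← hg v, ← hg w, h]
      have hgH : ∀ v w, H A (g v) (g w) = H B v w := by
        intro v w
        have h2 := hx v w
        rw [← hg v, ← hg w] at h2
        simp only [hx0] at h2
        rw [padF_apply e.injective] at h2
        exact h2
      rwa [hanti B A g hginj hgH] at hB
    · intro hA
      exact ⟨A, hA, e, e.injective, fun v w => padF_apply e.injective (H A) v w⟩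
  have hUinj : Function.Injective U := by
    intro 𝒮 𝒮' h
    ext A
    rw [← hwit A 𝒮, ← hwit A 𝒮', h]
  by_contra hcon
  push_neg at hcon
  have hΦ : ∀ 𝒮 : Set (Set J), ∃ φ : S, Mods φ = U 𝒮 := fun 𝒮 =>
    hcon (U 𝒮) (hopen 𝒮) (hinv 𝒮)
  choose Φ hΦspec using hΦ
  have hΦinj : Function.Injective Φ := by
    intro 𝒮 𝒮' h
    apply hUinj
    rw [← hΦspec 𝒮, ← hΦspec 𝒮', h]
  have hle : #(Set (Set J)) ≤ #S := mk_le_of_injective hΦinj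
  have hcount : #(Set (Set J)) = (2 : Cardinal) ^ ((2 : Cardinal) ^ ν) := by
    rw [mk_set, mk_set, hJν]
  rw [hcount] at hle
  exact absurd (hle.trans hS) (not_le.mpr hcard)

/-! ### The countable case: disjoint directed cycles with loops -/

open Classical in
/-- Directed cycles: vertex `(n,k)` represents element `k mod (n+3)` of a directed
cycle of length `n+3`; there is a loop on the `n`-th cycle iff `n ∈ A`. -/
def cycH (A : Set ℕ) : (ℕ × ℕ) → (ℕ × ℕ) → Bool :=
  fun p q => decide (p.1 = q.1 ∧ (q.2 = (p.2 + 1) % (p.1 + 3) ∨ (q.2 = p.2 ∧ p.1 ∈ A)))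

lemma cycH_true_iff (A : Set ℕ) (p q : ℕ × ℕ) :
    cycH A p q = true ↔
      (p.1 = q.1 ∧ (q.2 = (p.2 + 1) % (p.1 + 3) ∨ (q.2 = p.2 ∧ p.1 ∈ A))) := by
  simp [cycH]

lemma succ_mod_ne (n k : ℕ) : (k + 1) % (n + 3) ≠ k := by
  intro h
  have hk : k < n + 3 := h ▸ Nat.mod_lt _ (by omega)
  rcases Nat.lt_or_ge (k + 1) (n + 3) with h1 | h1
  · rw [Nat.mod_eq_of_lt h1] at h; omega
  · have : k + 1 = n + 3 := by omega
    rw [this, Nat.mod_self] at h; omega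

lemma cyc_supp (A : Set ℕ) (v : ℕ × ℕ) :
    ∃ w, cycH A v w = true ∨ cycH A w v = true := by
  refine ⟨(v.1, (v.2 + 1) % (v.1 + 3)), Or.inl ?_⟩
  rw [cycH_true_iff]
  exact ⟨rfl, Or.inl rfl⟩

lemma cyc_anti (A B : Set ℕ) (g : ℕ × ℕ → ℕ × ℕ) (hginj : Function.Injective g)
    (hg : ∀ v w, cycH B (g v) (g w) = cycH A v w) : A = B := by
  have step : ∀ v : ℕ × ℕ,
      g (v.1, (v.2 + 1) % (v.1 + 3)) = ((g v).1, ((g v).2 + 1) % ((g v).1 + 3)) := by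
    intro v
    have hv : cycH A v (v.1, (v.2 + 1) % (v.1 + 3)) = true := by
      rw [cycH_true_iff]; exact ⟨rfl, Or.inl rfl⟩
    have h2 : cycH B (g v) (g (v.1, (v.2 + 1) % (v.1 + 3))) = true := by
      rw [hg]; exact hv
    rw [cycH_true_iff] at h2
    obtain ⟨h1, h2 | ⟨h2a, h2b⟩⟩ := h2
    · exact Prod.ext h1.symm h2
    · exfalso
      have : g (v.1, (v.2 + 1) % (v.1 + 3)) = g v := Prod.ext h1.symm h2a
      have := hginj this
      have : (v.2 + 1) % (v.1 + 3) = v.2 := by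
        have := congrArg Prod.snd this; simpa using this
      exact succ_mod_ne _ _ this
  have walk : ∀ n j : ℕ, g (n, (j + 1) % (n + 3)) =
      ((g (n, 0)).1, ((g (n, 0)).2 + (j + 1)) % ((g (n, 0)).1 + 3)) := by
    intro n j
    induction j with
    | zero => simpa using step (n, 0)
    | succ j ih =>
      have hs := step (n, (j + 1) % (n + 3))
      simp only at hs
      rw [Nat.mod_add_mod] at hs
      rw [ih] at hs
      simp only at hs
      rw [Nat.mod_add_mod] at hs
      rw [hs]
      ring_nf
  ext n
  set c1 := (g (n, 0)).1 with hc1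
  set c2 := (g (n, 0)).2 with hc2
  have hret : g (n, 0) = (c1, (c2 + (n + 3)) % (c1 + 3)) := by
    have := walk n (n + 2)
    rw [show n + 2 + 1 = n + 3 by ring, Nat.mod_self] at this
    exact this
  have hc2eq : c2 = (c2 + (n + 3)) % (c1 + 3) := congrArg Prod.snd hret
  have hlt : c2 < c1 + 3 := by rw [hc2eq]; exact Nat.mod_lt _ (by omega)
  have hdvd : (c1 + 3) ∣ (n + 3) := by
    have hmodeq : c2 + (n + 3) ≡ c2 + 0 [MOD c1 + 3] := by
      unfold Nat.ModEq
      rw [add_zero, Nat.mod_eq_of_lt hlt, ← hc2eq]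
    have := (Nat.ModEq.refl (n := c1 + 3) c2).add_left_cancel hmodeq
    exact (Nat.modEq_zero_iff_dvd).mp this
  have hle1 : c1 ≤ n := by
    have := Nat.le_of_dvd (by omega) hdvd
    omega
  have hle2 : n ≤ c1 := by
    by_contra hcon
    push_neg at hcon
    have h3 : g (n, (c1 + 2 + 1) % (n + 3)) = (c1, (c2 + (c1 + 3)) % (c1 + 3)) := by
      have := walk n (c1 + 2)
      rw [show c1 + 2 + 1 = c1 + 3 by ring] at this ⊢
      exact this
    rw [Nat.mod_eq_of_lt (by omega), Nat.add_mod_right, Nat.mod_eq_of_lt hlt] at h3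
    have hgn0 : g (n, 0) = (c1, c2) := rfl
    have : (n, c1 + 3) = (n, 0) := hginj (by rw [h3, hgn0])
    have := congrArg Prod.snd this
    simp at this
  have hc1n : c1 = n := le_antisymm hle1 hle2
  have hA : cycH A (n, 0) (n, 0) = true ↔ n ∈ A := by
    rw [cycH_true_iff]
    constructor
    · rintro ⟨-, h | ⟨-, h⟩⟩
      · exfalso; exact succ_mod_ne n 0 h.symm
      · exact h
    · intro h; exact ⟨rfl, Or.inr ⟨rfl, h⟩⟩
  have hB : cycH B (g (n, 0)) (g (n, 0)) = true ↔ n ∈ B := by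
    have hgn : g (n, 0) = (n, c2) := by
      rw [show g (n, 0) = (c1, c2) from rfl, hc1n]
    rw [hgn, cycH_true_iff]
    constructor
    · rintro ⟨-, h | ⟨-, h⟩⟩
      · exfalso; exact succ_mod_ne n c2 h.symm
      · exact h
    · intro h; exact ⟨rfl, Or.inr ⟨rfl, h⟩⟩
  rw [← hA, ← hg (n, 0) (n, 0), hB]

/-! ### Clubs and stationary sets -/

/-- Closed unbounded subset of `o`. -/
def club (o : Ordinal.{0}) (C : Set Ordinal.{0}) : Prop :=
  C ⊆ Set.Iio o ∧ (∀ a < o, ∃ b ∈ C, a < b) ∧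
    ∀ a, a < o → 0 < a → (∀ b < a, ∃ c ∈ C, b < c ∧ c < a) → a ∈ C

/-- Stationary subset of `o`. -/
def stat (o : Ordinal.{0}) (S : Set Ordinal.{0}) : Prop :=
  ∀ C, club o C → (S ∩ C).Nonempty

lemma stat.mono {o : Ordinal.{0}} {S S' : Set Ordinal.{0}} (h : S ⊆ S') (hS : stat o S) :
    stat o S' := fun C hC => (hS C hC).imp fun _ hx => ⟨h hx.1, hx.2⟩

lemma club_Iio {o : Ordinal.{0}} (ho : Order.IsSuccLimit o) : club o (Set.Iio o) := by
  refine ⟨le_refl _, fun a ha => ⟨a + 1, ?_, lt_add_one a⟩, fun a ha _ _ => ha⟩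
  rw [Set.mem_Iio, Ordinal.add_one_eq_succ]
  exact ho.succ_lt ha

open Classical in
/-- Choice of a next element of `C` above `a`. -/
def nxt (C : Set Ordinal.{0}) (a : Ordinal.{0}) : Ordinal.{0} :=
  if h : ∃ b ∈ C, a < b then h.choose else 0

lemma nxt_spec {C : Set Ordinal.{0}} {a : Ordinal.{0}} (h : ∃ b ∈ C, a < b) :
    nxt C a ∈ C ∧ a < nxt C a := by
  rw [nxt, dif_pos h]
  exact ⟨h.choose_spec.1, h.choose_spec.2⟩

/-- Iterate a function, starting at `a`. -/
def iterSeq (G : Ordinal.{0} → Ordinal.{0}) (a : Ordinal.{0}) : ℕ → Ordinal.{0}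
  | 0 => a
  | n + 1 => G (iterSeq G a n)

lemma club_chain_limit {o : Ordinal.{0}} (hcof : ℵ₀ < o.cof) (f : ℕ → Ordinal.{0})
    (hlt : ∀ n, f n < o) (hmono : ∀ n, f n < f (n + 1)) :
    ∃ δ, δ < o ∧ 0 < δ ∧ (∀ n, f n < δ) ∧ (∀ b, b < δ → ∃ n, b ≤ f n) ∧ δ.cof = ℵ₀ := by
  refine ⟨Ordinal.lsub f, ?_, ?_, fun n => Ordinal.lt_lsub f n, ?_, ?_⟩
  · exact Ordinal.lsub_lt_ord (by rwa [mk_nat]) hlt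
  · exact lt_of_le_of_lt (zero_le (a := f 0)) (Ordinal.lt_lsub f 0)
  · intro b hb
    exact Ordinal.lt_lsub_iff.mp hb
  · have hlim : Order.IsSuccLimit (Ordinal.lsub f) := by
      refine ⟨?_, ?_⟩
      · intro h0
        exact h0.not_lt (Ordinal.lt_lsub f 0)
      · apply Order.isSuccPrelimit_of_succ_lt
        intro a ha
        obtain ⟨n, hn⟩ := Ordinal.lt_lsub_iff.mp ha
        calc Order.succ a ≤ Order.succ (f n) := Order.succ_le_succ hn
        _ ≤ f (n + 1) := Order.succ_le_of_lt (hmono n)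
        _ < Ordinal.lsub f := Ordinal.lt_lsub f (n + 1)
    refine le_antisymm ?_ (Ordinal.aleph0_le_cof.mpr hlim)
    exact (Ordinal.cof_lsub_le f).trans (by rw [mk_nat])

lemma mono_of_strict {f : ℕ → Ordinal.{0}} (h : ∀ n, f n < f (n + 1)) :
    ∀ {m n : ℕ}, m ≤ n → f m ≤ f n := by
  intro m n hmn
  induction n with
  | zero => simp_all
  | succ n ih =>
    rcases Nat.lt_or_ge m (n + 1) with h1 | h1
    · exact (ih (by omega)).trans (h n).le
    · have : m = n + 1 := by omega
      simp [this]

/-- Main iteration lemma: iterating a "step-up" function `G` from `a`, `ω` many times,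
produces a chain whose supremum is a closure point. -/
lemma exists_chain_point {o : Ordinal.{0}} (hcof : ℵ₀ < o.cof) (G : Ordinal.{0} → Ordinal.{0})
    (hG : ∀ b < o, b < G b ∧ G b < o) (a : Ordinal.{0}) (ha : a < o) :
    ∃ (f : ℕ → Ordinal.{0}) (δ : Ordinal.{0}), f 0 = a ∧ (∀ n, f n < o) ∧
      (∀ n, f (n + 1) = G (f n)) ∧ (∀ n, f n < f (n + 1)) ∧
      δ < o ∧ 0 < δ ∧ a < δ ∧ δ.cof = ℵ₀ ∧ (∀ n, f n < δ) ∧ (∀ b, b < δ → ∃ n, b ≤ f n) := by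
  set f := iterSeq G a with hf
  have hlt : ∀ n, f n < o := by
    intro n
    induction n with
    | zero => exact ha
    | succ n ih => exact (hG _ ih).2
  have hstep : ∀ n, f (n + 1) = G (f n) := fun n => rfl
  have hmono : ∀ n, f n < f (n + 1) := fun n => (hG _ (hlt n)).1
  obtain ⟨δ, hδo, hδ0, hfδ, hcf, hcofδ⟩ := club_chain_limit hcof f hlt hmono
  exact ⟨f, δ, rfl, hlt, hstep, hmono, hδo, hδ0, hfδ 0, hcofδ, hfδ, hcf⟩

/-- The set of points of `o` of cofinality `ω`. -/
def Eom (o : Ordinal.{0}) : Set Ordinal.{0} := {δ | δ < o ∧ δ.cof = ℵ₀}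

lemma stat_Eom {o : Ordinal.{0}} (holim : Order.IsSuccLimit o) (hcof : ℵ₀ < o.cof) :
    stat o (Eom o) := by
  intro C hC
  have hG : ∀ b < o, b < nxt C b ∧ nxt C b < o := by
    intro b hb
    have h := nxt_spec (hC.2.1 b hb)
    exact ⟨h.2, hC.1 h.1⟩
  obtain ⟨f, δ, hf0, hlt, hstep, hmono, hδo, hδ0, haδ, hcofδ, hfδ, hcf⟩ :=
    exists_chain_point hcof (nxt C) hG 0 holim.pos
  refine ⟨δ, ⟨hδo, hcofδ⟩, ?_⟩
  apply hC.2.2 δ hδo hδ0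
  intro b hb
  obtain ⟨n, hn⟩ := hcf b hb
  refine ⟨f (n + 1), ?_, ?_, hfδ (n + 1)⟩
  · rw [hstep n]
    exact (nxt_spec (hC.2.1 (f n) (hlt n))).1
  · exact hn.trans_lt (hmono n)

lemma club_diag {o : Ordinal.{0}} (holim : Order.IsSuccLimit o) (hcof : ℵ₀ < o.cof)
    (hreg : ∀ b < o, b.card < o.cof) (D : Ordinal.{0} → Set Ordinal.{0})
    (hD : ∀ c < o, club o (D c)) :
    club o {a | a < o ∧ 0 < a ∧ ∀ c < a, a ∈ D c} := by
  have hsucc : ∀ b < o, b + 1 < o := by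
    intro b hb
    rw [Ordinal.add_one_eq_succ]
    exact holim.succ_lt hb
  refine ⟨fun a ha => ha.1, ?_, ?_⟩
  · intro a ha
    set G : Ordinal.{0} → Ordinal.{0} :=
      fun b => max (b + 1) (Ordinal.bsup b (fun c _ => nxt (D c) b + 1)) with hGdef
    have hG : ∀ b < o, b < G b ∧ G b < o := by
      intro b hb
      constructor
      · exact (lt_add_one b).trans_le (le_max_left _ _)
      · apply max_lt (hsucc b hb)
        apply Ordinal.bsup_lt_ord (hreg b hb)
        intro c hc
        have hcο : c < o := hc.trans hb
        have := nxt_spec ((hD c hcο).2.1 b hb)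
        exact hsucc _ ((hD c hcο).1 this.1)
    obtain ⟨f, δ, hf0, hlt, hstep, hmono, hδo, hδ0, haδ, hcofδ, hfδ, hcf⟩ :=
      exists_chain_point hcof G hG a ha
    refine ⟨δ, ⟨hδo, hδ0, ?_⟩, haδ⟩
    intro c hcδ
    have hcο : c < o := hcδ.trans hδo
    apply (hD c hcο).2.2 δ hδo hδ0
    intro b hbδ
    obtain ⟨n, hn⟩ := hcf (max b c) (max_lt hbδ hcδ)
    have hc1 : c < f (n + 1) := ((le_max_right b c).trans hn).trans_lt (hmono n)
    have hb1 : b < f (n + 1) := ((le_max_left b c).trans hn).trans_lt (hmono n)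
    have hsp := nxt_spec ((hD c hcο).2.1 (f (n + 1)) (hlt (n + 1)))
    refine ⟨nxt (D c) (f (n + 1)), hsp.1, hb1.trans hsp.2, ?_⟩
    have h1 : nxt (D c) (f (n + 1)) + 1 ≤
        Ordinal.bsup (f (n + 1)) (fun c _ => nxt (D c) (f (n + 1)) + 1) :=
      Ordinal.le_bsup _ c hc1
    have h2 : nxt (D c) (f (n + 1)) < G (f (n + 1)) :=
      lt_of_lt_of_le (lt_add_one _) (h1.trans (le_max_right _ _))
    rw [← hstep (n + 1)] at h2
    exact h2.trans (hfδ (n + 2))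
  · intro a hao ha0 hacc
    refine ⟨hao, ha0, ?_⟩
    intro c hca
    apply (hD c (hca.trans hao)).2.2 a hao ha0
    intro b hba
    obtain ⟨e, ⟨heo, he0, heD⟩, hbe, hea⟩ := hacc (max b c) (max_lt hba hca)
    exact ⟨e, heD c ((le_max_right b c).trans_lt hbe), (le_max_left b c).trans_lt hbe, hea⟩

lemma club_interNat {o : Ordinal.{0}} (holim : Order.IsSuccLimit o) (hcof : ℵ₀ < o.cof)
    (D : ℕ → Set Ordinal.{0}) (hD : ∀ n, club o (D n)) :
    club o (Set.Iio o ∩ ⋂ n, D n) := by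
  have hsucc : ∀ b < o, b + 1 < o := by
    intro b hb
    rw [Ordinal.add_one_eq_succ]
    exact holim.succ_lt hb
  refine ⟨fun a ha => ha.1, ?_, ?_⟩
  · intro a ha
    set G : Ordinal.{0} → Ordinal.{0} :=
      fun b => max (b + 1) (Ordinal.lsub fun n : ℕ => nxt (D n) b) with hGdef
    have hG : ∀ b < o, b < G b ∧ G b < o := by
      intro b hb
      constructor
      · exact (lt_add_one b).trans_le (le_max_left _ _)
      · apply max_lt (hsucc b hb)
        apply Ordinal.lsub_lt_ord (by rwa [mk_nat])
        intro n
        exact (hD n).1 (nxt_spec ((hD n).2.1 b hb)).1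
    obtain ⟨f, δ, hf0, hlt, hstep, hmono, hδo, hδ0, haδ, hcofδ, hfδ, hcf⟩ :=
      exists_chain_point hcof G hG a ha
    refine ⟨δ, ⟨hδo, ?_⟩, haδ⟩
    rw [Set.mem_iInter]
    intro n
    apply (hD n).2.2 δ hδo hδ0
    intro b hbδ
    obtain ⟨m, hm⟩ := hcf b hbδ
    have hsp := nxt_spec ((hD n).2.1 (f m) (hlt m))
    refine ⟨nxt (D n) (f m), hsp.1, hm.trans_lt hsp.2, ?_⟩
    have h1 : nxt (D n) (f m) < Ordinal.lsub fun n : ℕ => nxt (D n) (f m) :=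
      Ordinal.lt_lsub _ n
    have h2 : nxt (D n) (f m) < G (f m) := h1.trans_le (le_max_right _ _)
    rw [← hstep m] at h2
    exact h2.trans (hfδ (m + 1))
  · intro a hao ha0 hacc
    refine ⟨hao, ?_⟩
    rw [Set.mem_iInter]
    intro n
    apply (hD n).2.2 a hao ha0
    intro b hba
    obtain ⟨e, ⟨heo, heD⟩, hbe, hea⟩ := hacc b hba
    rw [Set.mem_iInter] at heD
    exact ⟨e, heD n, hbe, hea⟩

lemma fodor {o : Ordinal.{0}} (holim : Order.IsSuccLimit o) (hcof : ℵ₀ < o.cof)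
    (hreg : ∀ b < o, b.card < o.cof) {S : Set Ordinal.{0}} (hS : stat o S)
    (hSo : S ⊆ Set.Iio o)
    (ψ : Ordinal.{0} → Ordinal.{0}) (hψ : ∀ δ ∈ S, ψ δ < δ) :
    ∃ c, c < o ∧ stat o {δ | δ ∈ S ∧ ψ δ = c} := by
  by_contra hcon
  push_neg at hcon
  have hclubs : ∀ c : Ordinal.{0}, ∃ C, club o C ∧ {δ | δ ∈ S ∧ ψ δ = c} ∩ C = ∅ := by
    intro c
    by_cases hc : c < o
    · have := hcon c hc
      rw [stat] at this
      push_neg at this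
      obtain ⟨C, hC, hCne⟩ := this
      exact ⟨C, hC, hCne⟩
    · refine ⟨Set.Iio o, club_Iio holim, ?_⟩
      rw [Set.eq_empty_iff_forall_notMem]
      rintro δ ⟨⟨hδS, hδψ⟩, hδo⟩
      exact hc (hδψ ▸ ((hψ δ hδS).trans hδo))
  choose D hDclub hDempty using hclubs
  obtain ⟨δ, hδS, hδo, hδ0, hδD⟩ := hS _ (club_diag holim hcof hreg D fun c _ => hDclub c)
  have hc0 : ψ δ < δ := hψ δ hδS
  have : δ ∈ {x | x ∈ S ∧ ψ x = ψ δ} ∩ D (ψ δ) := ⟨⟨hδS, rfl⟩, hδD _ hc0⟩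
  rw [hDempty (ψ δ)] at this
  exact this

lemma exists_ladder (δ : Ordinal.{0}) (hδ : δ.cof = ℵ₀) :
    ∃ l : ℕ → Ordinal.{0}, StrictMono l ∧ (∀ n, l n < δ) ∧ ∀ b < δ, ∃ n, b < l n := by
  obtain ⟨ι, g0, hg0, hι⟩ := Ordinal.exists_lsub_cof δ
  rw [hδ] at hι
  obtain ⟨e⟩ := Cardinal.eq.mp (hι.trans mk_nat.symm)
  set g : ℕ → Ordinal.{0} := g0 ∘ e.symm with hgdef
  have hδlim : Order.IsSuccLimit δ := Ordinal.aleph0_le_cof.mp (le_of_eq hδ.symm)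
  have hsucc : ∀ b < δ, b + 1 < δ := by
    intro b hb
    rw [Ordinal.add_one_eq_succ]
    exact hδlim.succ_lt hb
  have hglt : ∀ n, g n < δ := by
    intro n
    rw [← hg0]
    exact Ordinal.lt_lsub g0 (e.symm n)
  have hlsub : ∀ b < δ, ∃ n, b ≤ g n := by
    intro b hb
    have : b < Ordinal.lsub g := by
      apply lt_of_lt_of_le (hg0 ▸ hb)
      apply Ordinal.lsub_le
      intro i
      have : g0 i = g (e i) := by simp [hgdef]
      rw [this]
      exact Ordinal.lt_lsub g (e i)
    exact Ordinal.lt_lsub_iff.mp this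
  set l : ℕ → Ordinal.{0} :=
    fun n => Nat.rec (g 0 + 1) (fun n ih => max ih (g (n + 1)) + 1) n with hldef
  have hglt' : ∀ n, g n < l n := by
    intro n
    cases n with
    | zero => exact lt_add_one _
    | succ n => exact (le_max_right _ _).trans_lt (lt_add_one _)
  have hstep : ∀ n, l n < l (n + 1) := by
    intro n
    exact (le_max_left _ _).trans_lt (lt_add_one _)
  have hllt : ∀ n, l n < δ := by
    intro n
    induction n with
    | zero => exact hsucc _ (hglt 0)
    | succ n ih => exact hsucc _ (max_lt ih (hglt (n + 1)))
  refine ⟨l, strictMono_nat_of_lt_succ hstep, hllt, ?_⟩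
  intro b hb
  obtain ⟨n, hn⟩ := hlsub b hb
  exact ⟨n, hn.trans_lt (hglt' n)⟩

open Classical in
/-- A global choice of ladders at `ω`-cofinal ordinals. -/
def ladder (δ : Ordinal.{0}) : ℕ → Ordinal.{0} :=
  if h : δ.cof = ℵ₀ then (exists_ladder δ h).choose else fun _ => 0

lemma ladder_spec {δ : Ordinal.{0}} (h : δ.cof = ℵ₀) :
    StrictMono (ladder δ) ∧ (∀ n, ladder δ n < δ) ∧ ∀ b < δ, ∃ n, b < ladder δ n := by
  rw [ladder, dif_pos h]
  exact (exists_ladder δ h).choose_spec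

lemma club_Ioi {o : Ordinal.{0}} (holim : Order.IsSuccLimit o) {b : Ordinal.{0}} (hb : b < o) :
    club o {a | b < a ∧ a < o} := by
  have hsucc : ∀ x < o, x + 1 < o := by
    intro x hx
    rw [Ordinal.add_one_eq_succ]
    exact holim.succ_lt hx
  refine ⟨fun a ha => ha.2, ?_, ?_⟩
  · intro a ha
    refine ⟨max a b + 1, ⟨?_, hsucc _ (max_lt ha hb)⟩, ?_⟩
    · exact (le_max_right a b).trans_lt (lt_add_one _)
    · exact (le_max_left a b).trans_lt (lt_add_one _)
  · intro a hao ha0 hacc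
    obtain ⟨e, ⟨hbe, heo⟩, h0e, hea⟩ := hacc 0 ha0
    exact ⟨hbe.trans hea, hao⟩

theorem solovay {o : Ordinal.{0}} (holim : Order.IsSuccLimit o) (hcof : ℵ₀ < o.cof)
    (hreg : ∀ b < o, b.card < o.cof) :
    ∃ Fib : Ordinal.{0} → Set Ordinal.{0}, ∃ R : Set Ordinal.{0},
      R ⊆ Set.Iio o ∧ (∀ a < o, ∃ c ∈ R, a < c) ∧
      (∀ c ∈ R, stat o (Fib c) ∧ Fib c ⊆ Eom o) ∧
      (∀ c c', c ≠ c' → Disjoint (Fib c) (Fib c')) := by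
  have hEom : ∀ {δ}, δ ∈ Eom o → δ.cof = ℵ₀ := fun h => h.2
  -- Step 1: the key index
  have step1 : ∃ n : ℕ, ∀ η < o, stat o {δ | δ ∈ Eom o ∧ η ≤ ladder δ n} := by
    by_contra hcon
    push_neg at hcon
    have hchoice : ∀ n : ℕ, ∃ η, η < o ∧
        ∃ C, club o C ∧ {δ | δ ∈ Eom o ∧ η ≤ ladder δ n} ∩ C = ∅ := by
      intro n
      obtain ⟨η, hηo, hηns⟩ := hcon n
      rw [stat] at hηns
      push_neg at hηns
      obtain ⟨C, hC, hne⟩ := hηns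
      exact ⟨η, hηo, C, hC, hne⟩
    choose η hηo C hCclub hCempty using hchoice
    set ηs := Ordinal.lsub η with hηs
    have hηso : ηs < o := Ordinal.lsub_lt_ord (by rwa [mk_nat]) hηo
    set K : ℕ → Set Ordinal.{0} :=
      fun n => Nat.rec {a | ηs < a ∧ a < o} (fun n _ => C n) n with hK
    have hKclub : ∀ n, club o (K n) := by
      intro n
      cases n with
      | zero => exact club_Ioi holim hηso
      | succ n => exact hCclub n
    obtain ⟨δ, hδE, hδo', hδK⟩ := stat_Eom holim hcof _ (club_interNat holim hcof K hKclub)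
    rw [Set.mem_iInter] at hδK
    have hδη : ηs < δ := (hδK 0).1
    obtain ⟨n, hn⟩ := (ladder_spec (hEom hδE)).2.2 ηs hδη
    have : δ ∈ {δ | δ ∈ Eom o ∧ η n ≤ ladder δ n} ∩ C n :=
      ⟨⟨hδE, ((Ordinal.lt_lsub η n).le.trans hn.le)⟩, hδK (n + 1)⟩
    rw [hCempty n] at this
    exact this
  obtain ⟨n, hstat⟩ := step1
  refine ⟨fun c => {δ | δ ∈ Eom o ∧ ladder δ n = c},
    {c | c < o ∧ stat o {δ | δ ∈ Eom o ∧ ladder δ n = c}}, fun c hc => hc.1, ?_, ?_, ?_⟩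
  · intro a ha
    have ha1 : a + 1 < o := by
      rw [Ordinal.add_one_eq_succ]; exact holim.succ_lt ha
    obtain ⟨c, hco, hcstat⟩ := fodor holim hcof hreg (hstat (a + 1) ha1)
      (fun δ hδ => hδ.1.1) (fun δ => ladder δ n)
      (fun δ hδ => (ladder_spec (hEom hδ.1)).2.1 n)
    have hstat' : stat o {δ | δ ∈ Eom o ∧ ladder δ n = c} := by
      apply stat.mono _ hcstat
      rintro δ ⟨⟨hE, _⟩, hc⟩
      exact ⟨hE, hc⟩
    refine ⟨c, ⟨hco, hstat'⟩, ?_⟩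
    obtain ⟨δ, hδ, -⟩ := hcstat _ (club_Iio holim)
    calc a < a + 1 := lt_add_one a
    _ ≤ ladder δ n := hδ.1.2
    _ = c := hδ.2
  · exact fun c hc => ⟨hc.2, fun δ hδ => hδ.1⟩
  · intro c c' hcc'
    rw [Set.disjoint_left]
    rintro δ ⟨-, h1⟩ ⟨-, h2⟩
    exact hcc' (h1 ▸ h2)

/-! ### The ladder structure -/

/-- Position of an element of `o.ToType`. -/
def pos (o : Ordinal.{0}) (x : o.ToType) : Ordinal.{0} :=
  (((Ordinal.ToType.mk (o := o))).symm x).val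

/-- The element of `o.ToType` at a given position. -/
def enm (o : Ordinal.{0}) (a : Ordinal.{0}) (ha : a < o) : o.ToType :=
  (Ordinal.ToType.mk (o := o)) ⟨a, ha⟩

lemma pos_lt (o : Ordinal.{0}) (x : o.ToType) : pos o x < o :=
  (((Ordinal.ToType.mk (o := o))).symm x).2

lemma pos_enm (o : Ordinal.{0}) (a : Ordinal.{0}) (ha : a < o) : pos o (enm o a ha) = a := by
  rw [pos, enm, OrderIso.symm_apply_apply]

lemma pos_lt_iff {o : Ordinal.{0}} {x y : o.ToType} : pos o x < pos o y ↔ x < y := by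
  rw [pos, pos, Subtype.coe_lt_coe]
  exact ((Ordinal.ToType.mk (o := o))).symm.lt_iff_lt

lemma pos_le_iff {o : Ordinal.{0}} {x y : o.ToType} : pos o x ≤ pos o y ↔ x ≤ y := by
  rw [pos, pos, Subtype.coe_le_coe]
  exact ((Ordinal.ToType.mk (o := o))).symm.le_iff_le

lemma pos_inj {o : Ordinal.{0}} {x y : o.ToType} (h : pos o x = pos o y) : x = y := by
  have := ((Ordinal.ToType.mk (o := o))).symm.injective (Subtype.ext h)
  exact this

open Classical in
/-- The ladder structure: a spine copy of `o.ToType` carrying the order, and for each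
`δ ∈ W` a tag vertex connected to the ladder of `δ`; tag vertices for `δ ∉ W` carry
a loop instead. -/
def lamH (o : Ordinal.{0}) (W : Set Ordinal.{0}) :
    (o.ToType ⊕ o.ToType) → (o.ToType ⊕ o.ToType) → Bool
  | Sum.inl x, Sum.inl y => decide (x < y)
  | Sum.inl x, Sum.inr t => decide (pos o t ∈ W ∧ ∃ n, ladder (pos o t) n = pos o x)
  | Sum.inr t, Sum.inr t' => decide (t = t' ∧ pos o t ∉ W)
  | Sum.inr _, Sum.inl _ => false

lemma lamH_supp {o : Ordinal.{0}} (holim : Order.IsSuccLimit o) {W : Set Ordinal.{0}}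
    (hW : W ⊆ Eom o) (v : o.ToType ⊕ o.ToType) :
    ∃ w, lamH o W v w = true ∨ lamH o W w v = true := by
  have hsucc : ∀ b < o, b + 1 < o := by
    intro b hb
    rw [Ordinal.add_one_eq_succ]
    exact holim.succ_lt hb
  rcases v with x | t
  · refine ⟨Sum.inl (enm o (pos o x + 1) (hsucc _ (pos_lt o x))), Or.inl ?_⟩
    simp only [lamH, decide_eq_true_iff]
    rw [← pos_lt_iff, pos_enm]
    exact lt_add_one _
  · by_cases ht : pos o t ∈ W
    · have hcof : (pos o t).cof = ℵ₀ := (hW ht).2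
      have hl0 : ladder (pos o t) 0 < pos o t := (ladder_spec hcof).2.1 0
      refine ⟨Sum.inl (enm o (ladder (pos o t) 0) (hl0.trans (pos_lt o t))), Or.inr ?_⟩
      simp only [lamH, decide_eq_true_iff]
      exact ⟨ht, 0, (pos_enm _ _ _).symm⟩
    · refine ⟨Sum.inr t, Or.inl ?_⟩
      simp only [lamH, decide_eq_true_iff]
      exact ⟨by trivial, ht⟩

theorem lamH_anti {o : Ordinal.{0}} (holim : Order.IsSuccLimit o) (hcof : ℵ₀ < o.cof)
    (hreg : ∀ b < o, b.card < o.cof)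
    {W W' : Set Ordinal.{0}} (hW : W ⊆ Eom o) (hW' : W' ⊆ Eom o)
    (hdiff : stat o (W \ W'))
    (g : (o.ToType ⊕ o.ToType) → (o.ToType ⊕ o.ToType))
    (hginj : Function.Injective g)
    (hg : ∀ v w, lamH o W' (g v) (g w) = lamH o W v w) : False := by
  have hsucc : ∀ b < o, b + 1 < o := by
    intro b hb
    rw [Ordinal.add_one_eq_succ]
    exact holim.succ_lt hb
  -- Step 1: `g` maps the spine into the spine.
  have s1 : ∀ x : o.ToType, ∃ y, g (Sum.inl x) = Sum.inl y := by
    intro x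
    rcases hgx : g (Sum.inl x) with y | t
    · exact ⟨y, rfl⟩
    exfalso
    set y₀ := enm o (pos o x + 1) (hsucc _ (pos_lt o x)) with hy₀
    have hxy : x < y₀ := by
      rw [← pos_lt_iff, pos_enm]
      exact lt_add_one _
    have hedge : lamH o W (Sum.inl x) (Sum.inl y₀) = true := by
      simp only [lamH, decide_eq_true_iff]
      exact hxy
    have h2 : lamH o W' (g (Sum.inl x)) (g (Sum.inl y₀)) = true := by
      rw [hg]; exact hedge
    rcases hgy : g (Sum.inl y₀) with y' | t'
    · rw [hgx, hgy] at h2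
      simp only [lamH] at h2
      exact Bool.false_ne_true h2
    · rw [hgx, hgy] at h2
      simp only [lamH, decide_eq_true_iff] at h2
      have : g (Sum.inl y₀) = g (Sum.inl x) := by rw [hgx, hgy, h2.1]
      have := hginj this
      simp only [Sum.inl.injEq] at this
      exact absurd (this ▸ hxy) (lt_irrefl _)
  choose gs hgs using s1
  -- Step 2: `gs` is strictly monotone.
  have s2 : ∀ x y : o.ToType, gs x < gs y ↔ x < y := by
    intro x y
    have h := hg (Sum.inl x) (Sum.inl y)
    rw [hgs x, hgs y] at h
    simp only [lamH] at h
    exact decide_eq_decide.mp h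
  have gsmono : StrictMono gs := fun x y h => (s2 x y).mpr h
  have gsinj : Function.Injective gs := gsmono.injective
  have hinfl : ∀ x : o.ToType, x ≤ gs x := fun x => gsmono.le_apply
  -- Step 4: `g` maps `W`-tags to `W'`-tags.
  have s4 : ∀ t : o.ToType, pos o t ∈ W →
      ∃ t', g (Sum.inr t) = Sum.inr t' ∧ pos o t' ∈ W' := by
    intro t ht
    rcases hgt : g (Sum.inr t) with z | t'
    · exfalso
      have claim : ∀ x : o.ToType, pos o t ≤ pos o x → gs x = z := by
        intro x hx
        have hne1 : lamH o W (Sum.inl x) (Sum.inr t) = false := by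
          simp only [lamH, decide_eq_false_iff_not]
          rintro ⟨-, n, hn⟩
          have := (ladder_spec (hW ht).2).2.1 n
          rw [hn] at this
          exact absurd (this.trans_le hx) (lt_irrefl _)
        have hne2 : lamH o W (Sum.inr t) (Sum.inl x) = false := rfl
        have h1 := hg (Sum.inl x) (Sum.inr t)
        rw [hgs x, hgt, hne1] at h1
        simp only [lamH, decide_eq_false_iff_not] at h1
        have h2 := hg (Sum.inr t) (Sum.inl x)
        rw [hgs x, hgt, hne2] at h2
        simp only [lamH, decide_eq_false_iff_not] at h2
        exact le_antisymm (not_lt.mp h2) (not_lt.mp h1)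
      have h1 : gs (enm o (pos o t) (pos_lt o t)) = z := by
        apply claim
        rw [pos_enm]
      have h2 : gs (enm o (pos o t + 1) (hsucc _ (pos_lt o t))) = z := by
        apply claim
        rw [pos_enm]
        exact (lt_add_one _).le
      have := gsinj (h1.trans h2.symm)
      have := congrArg (pos o) this
      rw [pos_enm, pos_enm] at this
      exact absurd this (lt_add_one _).ne
    · refine ⟨t', rfl, ?_⟩
      have hloop : lamH o W (Sum.inr t) (Sum.inr t) = false := by
        simp only [lamH, decide_eq_false_iff_not]
        rintro ⟨-, h⟩
        exact h ht
      have h := hg (Sum.inr t) (Sum.inr t)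
      rw [hgt, hloop] at h
      simp only [lamH, decide_eq_false_iff_not] at h
      have := not_and.mp h (by trivial)
      exact not_not.mp this
  -- Step 6: the closure club of `gs`.
  set gso : Ordinal.{0} → Ordinal.{0} :=
    fun b => if h : b < o then pos o (gs (enm o b h)) else 0 with hgso
  have hgsolt : ∀ b < o, gso b < o := by
    intro b hb
    rw [hgso]
    simp only [dif_pos hb]
    exact pos_lt o _
  set Cg : Set Ordinal.{0} := {a | a < o ∧ ∀ b < a, gso b < a} with hCg
  have hCgclub : club o Cg := by
    refine ⟨fun a ha => ha.1, ?_, ?_⟩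
    · intro a ha
      set G : Ordinal.{0} → Ordinal.{0} :=
        fun b => max (b + 1) (Ordinal.bsup b (fun c _ => gso c + 1)) with hGdef
      have hG : ∀ b < o, b < G b ∧ G b < o := by
        intro b hb
        constructor
        · exact (lt_add_one b).trans_le (le_max_left _ _)
        · apply max_lt (hsucc b hb)
          apply Ordinal.bsup_lt_ord (hreg b hb)
          intro c hc
          exact hsucc _ (hgsolt c (hc.trans hb))
      obtain ⟨f, δ, hf0, hlt, hstep, hmono, hδo, hδ0, haδ, hcofδ, hfδ, hcf⟩ :=
        exists_chain_point hcof G hG a ha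
      refine ⟨δ, ⟨hδo, ?_⟩, haδ⟩
      intro b hbδ
      obtain ⟨n, hn⟩ := hcf b hbδ
      have hb1 : b < f (n + 1) := hn.trans_lt (hmono n)
      have h1 : gso b + 1 ≤ Ordinal.bsup (f (n + 1)) (fun c _ => gso c + 1) :=
        Ordinal.le_bsup _ b hb1
      have h2 : gso b < G (f (n + 1)) :=
        lt_of_lt_of_le (lt_add_one _) (h1.trans (le_max_right _ _))
      rw [← hstep (n + 1)] at h2
      exact h2.trans (hfδ (n + 2))
    · intro a hao ha0 hacc
      refine ⟨hao, ?_⟩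
      intro b hba
      obtain ⟨e, ⟨heo, he⟩, hbe, hea⟩ := hacc b hba
      exact (he b hbe).trans hea
  -- Step 7: conclude.
  obtain ⟨δ, hδWW', hδCg⟩ := hdiff Cg hCgclub
  have hδo : δ < o := hδCg.1
  have hδW : δ ∈ W := hδWW'.1
  have hδW' : δ ∉ W' := hδWW'.2
  have hδcof : δ.cof = ℵ₀ := (hW hδW).2
  set t : o.ToType := enm o δ hδo with htdef
  have hpt : pos o t = δ := pos_enm o δ hδo
  obtain ⟨t', hgt, ht'⟩ := s4 t (by rwa [hpt])
  set δ' := pos o t' with hδ'def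
  have hδ'cof : δ'.cof = ℵ₀ := (hW' ht').2
  have hladd : ∀ n, ladder δ n < δ := (ladder_spec hδcof).2.1
  have hladdo : ∀ n, ladder δ n < o := fun n => (hladd n).trans hδo
  set v : ℕ → Ordinal.{0} := fun n => pos o (gs (enm o (ladder δ n) (hladdo n))) with hv
  have hva : ∀ n, v n < δ := by
    intro n
    have := hδCg.2 (ladder δ n) (hladd n)
    rw [hgso] at this
    simp only [dif_pos (hladdo n)] at this
    exact this
  have hvb : ∀ ρ < δ, ∃ n, ρ < v n := by
    intro ρ hρ
    obtain ⟨n, hn⟩ := (ladder_spec hδcof).2.2 ρ hρ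
    refine ⟨n, hn.trans_le ?_⟩
    rw [hv]
    calc ladder δ n = pos o (enm o (ladder δ n) (hladdo n)) := (pos_enm _ _ _).symm
    _ ≤ pos o (gs (enm o (ladder δ n) (hladdo n))) := pos_le_iff.mpr (hinfl _)
  have s5 : ∀ n, ∃ m, ladder δ' m = v n := by
    intro n
    have hedge : lamH o W (Sum.inl (enm o (ladder δ n) (hladdo n))) (Sum.inr t) = true := by
      simp only [lamH, decide_eq_true_iff]
      rw [hpt]
      exact ⟨hδW, n, (pos_enm _ _ _).symm⟩
    have h := hg (Sum.inl (enm o (ladder δ n) (hladdo n))) (Sum.inr t)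
    rw [hgs, hgt, hedge] at h
    simp only [lamH, decide_eq_true_iff] at h
    exact h.2
  choose m hm using s5
  have hvinj : Function.Injective v := by
    intro n n' h
    rw [hv] at h
    have := gsinj (pos_inj h)
    have := congrArg (pos o) this
    rw [pos_enm, pos_enm] at this
    exact (ladder_spec hδcof).1.injective this
  have hminj : Function.Injective m := by
    intro n n' h
    apply hvinj
    rw [← hm n, ← hm n', h]
  have hii : ∀ k, ladder δ' k < δ := by
    intro k
    have : ∃ n, k ≤ m n := by
      by_contra hcon
      push_neg at hcon
      have : Function.Injective (fun n => (⟨m n, hcon n⟩ : Fin k)) := by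
        intro n n' h
        exact hminj (congrArg Fin.val h)
      exact absurd this (_root_.not_injective_infinite_finite _)
    obtain ⟨n, hn⟩ := this
    calc ladder δ' k ≤ ladder δ' (m n) := (ladder_spec hδ'cof).1.monotone hn
    _ = v n := hm n
    _ < δ := hva n
  have hi : ¬(δ' < δ) := by
    intro hlt
    obtain ⟨n, hn⟩ := hvb δ' hlt
    have : v n < δ' := by
      rw [← hm n]
      exact (ladder_spec hδ'cof).2.1 (m n)
    exact absurd (hn.trans this) (lt_irrefl _)
  have hiii : ¬(δ < δ') := by
    intro hlt
    obtain ⟨k, hk⟩ := (ladder_spec hδ'cof).2.2 δ hlt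
    exact absurd (hk.trans (hii k)) (lt_irrefl _)
  have : δ = δ' := le_antisymm (not_lt.mp hi) (not_lt.mp hiii)
  rw [← this] at ht'
  exact hδW' ht'

/-- The coded union of Solovay fibers determined by a boolean chooser `b`. -/
def wcode {J : Type} (cOf : J → Ordinal.{0}) (pc : J × Bool ≃ J)
    (Fib : Ordinal.{0} → Set Ordinal.{0}) (b : J → Bool) : Set Ordinal.{0} :=
  ⋃ j : J, Fib (cOf (pc (j, b j)))

end Stmt18

/-- Let `ν < κ` be infinite cardinals with `ν` regular, and assume `2^(2^ν) > 2^κ`. Then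
there is an open, isomorphism-invariant subset of the space `Mod^κ_L` of graph structures
on `κ` (with the bounded topology) that is not the class of models of any
`L_{κ⁺κ}`-sentence. (Since `|L_{κ⁺κ}| = 2^κ`, this is expressed by: for any assignment of
model classes to a set of sentences of size `≤ 2^κ`, some open invariant set is omitted.) -/
theorem stmt_18 (κ ν : Cardinal) (hνinf : ℵ₀ ≤ ν) (hνreg : ν.IsRegular) (hνκ : ν < κ)
    (hcard : (2 : Cardinal) ^ κ < (2 : Cardinal) ^ ((2 : Cardinal) ^ ν)) :
    ∀ (S : Type) (hS : Cardinal.mk S ≤ (2 : Cardinal) ^ κ)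
      (Mods : S → Set (κ.ord.ToType → κ.ord.ToType → Bool)),
      ∃ U : Set (κ.ord.ToType → κ.ord.ToType → Bool),
        (modTopology κ).IsOpen U ∧
        (∀ x y, modIso κ x y → (x ∈ U ↔ y ∈ U)) ∧
        ∀ φ : S, Mods φ ≠ U := by
  have hκinf : ℵ₀ ≤ κ := hνinf.trans hνκ.le
  rcases eq_or_lt_of_le hνinf with hνω | hνω
  · -- the countable case: cycles
    refine Stmt18.plumbing κ ν hκinf hcard ℕ (ℕ × ℕ) ?_ ?_ Stmt18.cycH
      Stmt18.cyc_supp Stmt18.cyc_anti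
    · rw [mk_nat]; exact hνω
    · have h1 : #(ℕ × ℕ) = ℵ₀ := mk_eq_aleph0 _
      rw [h1, hνω]; exact hνκ
  · -- the uncountable case: ladder systems on stationary sets
    set o : Ordinal := ν.ord with ho
    have holim : Order.IsSuccLimit o := Cardinal.isSuccLimit_ord hνinf
    have hcofo : o.cof = ν := hνreg.cof_eq
    have hcof : ℵ₀ < o.cof := by rw [hcofo]; exact hνω
    have hreg : ∀ b < o, b.card < o.cof := by
      intro b hb
      rw [hcofo]
      exact Cardinal.lt_ord.mp hb
    obtain ⟨Fib, R, hRIio, hRunb, hRstat, hRdisj⟩ := Stmt18.solovay holim hcof hreg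
    set J := {x : o.ToType // Stmt18.pos o x ∈ R} with hJ
    set cOf : J → Ordinal := fun j => Stmt18.pos o j.val with hcOf
    have hcOfR : ∀ j : J, cOf j ∈ R := fun j => j.2
    have hcOfinj : Function.Injective cOf := by
      intro j j' h
      exact Subtype.ext (Stmt18.pos_inj h)
    have hOν : #o.ToType = ν := by rw [Cardinal.mk_toType, ho, Cardinal.card_ord]
    have hJν : #J = ν := by
      apply le_antisymm
      · rw [← hOν]; exact mk_subtype_le _
      · have hlsub : Ordinal.lsub (fun j : J => cOf j) = o := by
          apply le_antisymm
          · exact Ordinal.lsub_le fun j => Stmt18.pos_lt o j.val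
          · by_contra hlt
            push_neg at hlt
            obtain ⟨c, hcR, hc⟩ := hRunb _ hlt
            have hco : c < o := hRIio hcR
            set j : J := ⟨Stmt18.enm o c hco, by rw [Stmt18.pos_enm]; exact hcR⟩ with hj
            have h1 : cOf j < Ordinal.lsub (fun j : J => cOf j) := Ordinal.lt_lsub _ j
            have h2 : cOf j = c := Stmt18.pos_enm o c hco
            rw [h2] at h1
            exact absurd (hc.trans h1) (lt_irrefl _)
        have := Ordinal.cof_lsub_le (fun j : J => cOf j)
        rw [hlsub, hcofo] at this
        exact this
    obtain ⟨pc⟩ : Nonempty (J × Bool ≃ J) := by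
      rw [← Cardinal.eq, mk_prod, lift_id, lift_id, Cardinal.mk_bool, hJν]
      exact Cardinal.mul_eq_left (hνω.le) (by
        calc (2 : Cardinal) ≤ ℵ₀ := by exact_mod_cast Cardinal.nat_lt_aleph0 2 |>.le
        _ ≤ ν := hνinf) (by norm_num)
    set bset : Set J → J → Bool :=
      fun A j => @decide (j ∈ A) (Classical.propDecidable _) with hbset
    set Wc : Set J → Set Ordinal := fun A => Stmt18.wcode cOf pc Fib (bset A) with hWc
    have hWcEom : ∀ A, Wc A ⊆ Stmt18.Eom o := by
      intro A δ hδ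
      simp only [hWc, Stmt18.wcode, Set.mem_iUnion] at hδ
      obtain ⟨j, hj⟩ := hδ
      exact (hRstat _ (hcOfR _)).2 hj
    have hWcdiff : ∀ A B : Set J, A ≠ B → Stmt18.stat o (Wc A \ Wc B) := by
      intro A B hne
      have hex : ∃ j₀, ¬(j₀ ∈ A ↔ j₀ ∈ B) := by
        by_contra hx
        push_neg at hx
        exact hne (Set.ext fun j => hx j)
      obtain ⟨j₀, hj₀⟩ := hex
      have hbne : bset A j₀ ≠ bset B j₀ := by
        intro h
        rw [hbset] at h
        simp only at h
        exact hj₀ (decide_eq_decide.mp h)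
      set c₀ := cOf (pc (j₀, bset A j₀)) with hc₀
      have hsub : Fib c₀ ⊆ Wc A \ Wc B := by
        intro δ hδ
        constructor
        · simp only [hWc, Stmt18.wcode, Set.mem_iUnion]
          exact ⟨j₀, hδ⟩
        · simp only [hWc, Stmt18.wcode, Set.mem_iUnion]
          rintro ⟨j, hj⟩
          have hne2 : c₀ ≠ cOf (pc (j, bset B j)) := by
            intro h
            have := hcOfinj h
            have := pc.injective this
            rw [Prod.ext_iff] at this
            obtain ⟨h1, h2⟩ := this
            simp only at h1 h2
            subst h1
            exact hbne h2
          exact Set.disjoint_left.mp (hRdisj _ _ hne2) hδ hj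
      exact Stmt18.stat.mono hsub (hRstat _ (hcOfR _)).1
    refine Stmt18.plumbing κ ν hκinf hcard J (o.ToType ⊕ o.ToType) hJν ?_
      (fun A => Stmt18.lamH o (Wc A)) (fun A v => Stmt18.lamH_supp holim (hWcEom A) v) ?_
    · rw [mk_sum]
      simp only [lift_id]
      rw [hOν, Cardinal.add_eq_self hνinf]
      exact hνκ
    · intro A B g hginj hg
      by_contra hne
      exact Stmt18.lamH_anti holim hcof hreg (hWcEom A) (hWcEom B) (hWcdiff A B hne)
        g hginj hg
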